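/- Let ℓ₁, ℓ₂ > 0, and let (x₁, x₂, α₁, α₂, p₁, p₂, η₁, η₂) be a solution of the Hamiltonian system with H = ½(L₁² + L₂²) where L₁ = p₁ - (η₁/ℓ₁) sin α₁ - (η₂/ℓ₂) sin α₂ and L₂ = p₂ + (η₁/ℓ₁) cos α₁ + (η₂/ℓ₂) cos α₂, restricted to H = ½, so that L₁ = cos γ, L₂ = sin γ for a differentiable function γ. Then the curvature κ = γ' of the curve (x₁, x₂) equals η₁/ℓ₁² + η₂/ℓ₂². -/
import Mathlib


open Real

theorem stmt6 (l1 l2 : ℝ) (hl1 : 0 < l1) (hl2 : 0 < l2)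
    (x₁ x₂ α₁ α₂ η₁ η₂ γ : ℝ → ℝ) (p₁ p₂ : ℝ)
    -- the constraints `L₁ = cos γ`, `L₂ = sin γ` (so `H = ½`)
    (hL₁ : ∀ t, Real.cos (γ t) =
      p₁ - η₁ t / l1 * Real.sin (α₁ t) - η₂ t / l2 * Real.sin (α₂ t))
    (hL₂ : ∀ t, Real.sin (γ t) =
      p₂ + η₁ t / l1 * Real.cos (α₁ t) + η₂ t / l2 * Real.cos (α₂ t))
    -- the Hamiltonian equations
    (hx₁ : ∀ t, HasDerivAt x₁ (Real.cos (γ t)) t)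
    (hx₂ : ∀ t, HasDerivAt x₂ (Real.sin (γ t)) t)
    (hα₁ : ∀ t, HasDerivAt α₁ (Real.sin (γ t - α₁ t) / l1) t)
    (hα₂ : ∀ t, HasDerivAt α₂ (Real.sin (γ t - α₂ t) / l2) t)
    (hη₁ : ∀ t, HasDerivAt η₁ (η₁ t * Real.cos (γ t - α₁ t) / l1) t)
    (hη₂ : ∀ t, HasDerivAt η₂ (η₂ t * Real.cos (γ t - α₂ t) / l2) t)
    (hγ : Differentiable ℝ γ) :
    -- the curvature `κ = γ'` of the curve `(x₁, x₂)` equals `η₁/ℓ₁² + η₂/ℓ₂²`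
    ∀ t, deriv γ t = η₁ t / l1 ^ 2 + η₂ t / l2 ^ 2 := by
  intro t
  have hγt : HasDerivAt γ (deriv γ t) t := (hγ t).hasDerivAt
  have hl1' := hl1.ne'
  have hl2' := hl2.ne'
  -- derivative of sin ∘ γ
  have hsin : HasDerivAt (fun t => Real.sin (γ t)) (Real.cos (γ t) * deriv γ t) t :=
    hγt.sin
  have hcos : HasDerivAt (fun t => Real.cos (γ t)) (-Real.sin (γ t) * deriv γ t) t :=
    hγt.cos
  -- derivative of RHS of hL₂
  have hR2 : HasDerivAt (fun t => p₂ + η₁ t / l1 * Real.cos (α₁ t) + η₂ t / l2 * Real.cos (α₂ t))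
      ((η₁ t * Real.cos (γ t - α₁ t) / l1) / l1 * Real.cos (α₁ t)
        + η₁ t / l1 * (-Real.sin (α₁ t) * (Real.sin (γ t - α₁ t) / l1))
        + ((η₂ t * Real.cos (γ t - α₂ t) / l2) / l2 * Real.cos (α₂ t)
        + η₂ t / l2 * (-Real.sin (α₂ t) * (Real.sin (γ t - α₂ t) / l2)))) t := by
    exact ((((hη₁ t).div_const l1).mul ((hα₁ t).cos)).const_add p₂).add
      (((hη₂ t).div_const l2).mul ((hα₂ t).cos))
  have hR1 : HasDerivAt (fun t => p₁ - η₁ t / l1 * Real.sin (α₁ t) - η₂ t / l2 * Real.sin (α₂ t))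
      (-((η₁ t * Real.cos (γ t - α₁ t) / l1) / l1 * Real.sin (α₁ t)
        + η₁ t / l1 * (Real.cos (α₁ t) * (Real.sin (γ t - α₁ t) / l1)))
        - ((η₂ t * Real.cos (γ t - α₂ t) / l2) / l2 * Real.sin (α₂ t)
        + η₂ t / l2 * (Real.cos (α₂ t) * (Real.sin (γ t - α₂ t) / l2)))) t := by
    exact ((((hη₁ t).div_const l1).mul ((hα₁ t).sin)).const_sub p₁).sub
      (((hη₂ t).div_const l2).mul ((hα₂ t).sin))
  have h2 : Real.cos (γ t) * deriv γ t =
      ((η₁ t * Real.cos (γ t - α₁ t) / l1) / l1 * Real.cos (α₁ t)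
        + η₁ t / l1 * (-Real.sin (α₁ t) * (Real.sin (γ t - α₁ t) / l1))
        + ((η₂ t * Real.cos (γ t - α₂ t) / l2) / l2 * Real.cos (α₂ t)
        + η₂ t / l2 * (-Real.sin (α₂ t) * (Real.sin (γ t - α₂ t) / l2)))) := by
    have : (fun t => Real.sin (γ t)) =
        (fun t => p₂ + η₁ t / l1 * Real.cos (α₁ t) + η₂ t / l2 * Real.cos (α₂ t)) :=
      funext hL₂
    exact (this ▸ hsin).unique hR2
  have h1 : -Real.sin (γ t) * deriv γ t =
      (-((η₁ t * Real.cos (γ t - α₁ t) / l1) / l1 * Real.sin (α₁ t)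
        + η₁ t / l1 * (Real.cos (α₁ t) * (Real.sin (γ t - α₁ t) / l1)))
        - ((η₂ t * Real.cos (γ t - α₂ t) / l2) / l2 * Real.sin (α₂ t)
        + η₂ t / l2 * (Real.cos (α₂ t) * (Real.sin (γ t - α₂ t) / l2)))) := by
    have : (fun t => Real.cos (γ t)) =
        (fun t => p₁ - η₁ t / l1 * Real.sin (α₁ t) - η₂ t / l2 * Real.sin (α₂ t)) :=
      funext hL₁
    exact (this ▸ hcos).unique hR1
  simp only [Real.cos_sub, Real.sin_sub] at h1 h2
  have s1 := Real.sin_sq_add_cos_sq (α₁ t)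
  have s2 := Real.sin_sq_add_cos_sq (α₂ t)
  have hc2 : Real.cos (γ t) * deriv γ t = Real.cos (γ t) * (η₁ t / l1 ^ 2 + η₂ t / l2 ^ 2) := by
    linear_combination h2 + (η₁ t / l1 ^ 2 * Real.cos (γ t)) * s1
      + (η₂ t / l2 ^ 2 * Real.cos (γ t)) * s2
  have hs2 : Real.sin (γ t) * deriv γ t = Real.sin (γ t) * (η₁ t / l1 ^ 2 + η₂ t / l2 ^ 2) := by
    linear_combination -h1 + (η₁ t / l1 ^ 2 * Real.sin (γ t)) * s1
      + (η₂ t / l2 ^ 2 * Real.sin (γ t)) * s2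
  have hone := Real.sin_sq_add_cos_sq (γ t)
  linear_combination Real.cos (γ t) * hc2 + Real.sin (γ t) * hs2
    - (deriv γ t - (η₁ t / l1 ^ 2 + η₂ t / l2 ^ 2)) * hone
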